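/- arXiv:2603.14924 — 2 statements merged into one kernel-verified Lean document; each statement's English description precedes it below -/
import Mathlib

section
/- Let T ⊆ ℝ^m be open, let φ : T → ℝ^{n−m} be Lipschitz with Lipschitz constant M ≥ 0, let S := {(u, φ(u)) : u ∈ T} be its graph, and put L := 1/√(1 + M²). Then for every x ∈ ℝⁿ \ (T × ℝ^{n−m}) one has d(x, S) ≥ L·d(x, ∂S), where ∂S := cl(S) \ S is the frontier of S and d denotes Euclidean distance to a set. -/
open scoped BigOperators

noncomputable section

open Classical in
/-- Distance to a set, with the convention `d(x, ∅) = 1`. -/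
def d1 {X : Type*} [PseudoMetricSpace X] (x : X) (S : Set X) : ℝ :=
  if S.Nonempty then Metric.infDist x S else 1

/-- `ℝⁿ = ℝ^m × ℝ^(n-m)` with the Euclidean (ℓ²) norm. -/
abbrev EucProd (m l : ℕ) := WithLp 2 (EuclideanSpace ℝ (Fin m) × EuclideanSpace ℝ (Fin l))

/-- The point `(u, w)` of `ℝ^m × ℝ^(n-m)` as a point of the Euclidean product. -/
abbrev eucMk {m l : ℕ} (u : EuclideanSpace ℝ (Fin m)) (w : EuclideanSpace ℝ (Fin l)) :
    EucProd m l := (WithLp.equiv 2 (EuclideanSpace ℝ (Fin m) × EuclideanSpace ℝ (Fin l))).symm (u, w)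

/-- Coordinates are bounded by the Euclidean norm. -/
lemma coord_le_norm {l : ℕ} (w : EuclideanSpace ℝ (Fin l)) (i : Fin l) : |w i| ≤ ‖w‖ := by
  rw [EuclideanSpace.norm_eq]
  rw [← Real.sqrt_sq_eq_abs]
  apply Real.sqrt_le_sqrt
  exact Finset.single_le_sum (f := fun j => ‖w j‖ ^ 2)
    (fun j _ => by positivity) (Finset.mem_univ i) |>.trans_eq' (by rw [Real.norm_eq_abs, sq_abs])

/-- The key scalar inequality. -/
lemma key_quad (M a b e t : ℝ) (hM : 0 ≤ M) (ha : 0 ≤ a) (hb : 0 ≤ b) (he : 0 ≤ e)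
    (ht0 : 0 ≤ t) (ht1 : t ≤ 1) (hee : e ≤ b + M * (t * a)) :
    ((1 - t) * a) ^ 2 + e ^ 2 ≤ (1 + M ^ 2) * (a ^ 2 + b ^ 2) := by
  have h1 : e ^ 2 ≤ (b + M * (t * a)) ^ 2 := by nlinarith
  have hconv : ((1 - t) * a) ^ 2 + (b + M * (t * a)) ^ 2
      ≤ (1 - t) * (a ^ 2 + b ^ 2) + t * ((b + M * a) ^ 2) := by
    nlinarith [mul_nonneg (mul_nonneg ht0 (sub_nonneg.2 ht1)) (sq_nonneg a),
      mul_nonneg (mul_nonneg ht0 (sub_nonneg.2 ht1)) (mul_nonneg (sq_nonneg M) (sq_nonneg a))]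
  have hcs : (b + M * a) ^ 2 ≤ (1 + M ^ 2) * (a ^ 2 + b ^ 2) := by nlinarith [sq_nonneg (a - M * b)]
  nlinarith [mul_nonneg ht0 (sub_nonneg.2 hcs),
    mul_nonneg (sub_nonneg.2 ht1) (mul_nonneg (sq_nonneg M) (by positivity : (0:ℝ) ≤ a ^ 2 + b ^ 2))]

/-- **Remark 2.4, inequality (2.5).** Let `T ⊆ ℝ^m` be open, `φ : T → ℝ^(n-m)` `M`-Lipschitz
with graph `S`, and `L = 1/√(1+M²)`. Then `d(x, S) ≥ L·d(x, ∂S)` for every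
`x ∈ ℝⁿ \ (T × ℝ^(n-m))`, where `∂S = cl(S) \ S` and `d(x, ∅) := 1`. -/
theorem dist_to_graph_frontier_bound (m l : ℕ) (T : Set (EuclideanSpace ℝ (Fin m)))
    (hT : IsOpen T)
    (φ : EuclideanSpace ℝ (Fin m) → EuclideanSpace ℝ (Fin l))
    (M : ℝ) (hM : 0 ≤ M)
    (hLip : ∀ u ∈ T, ∀ v ∈ T, ‖φ u - φ v‖ ≤ M * ‖u - v‖)
    (S : Set (EucProd m l)) (hS : S = {z | ∃ u ∈ T, z = eucMk u (φ u)}) :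
    ∀ x : EucProd m l,
      (WithLp.equiv 2 (EuclideanSpace ℝ (Fin m) × EuclideanSpace ℝ (Fin l)) x).1 ∉ T →
      d1 x S ≥ (1 / Real.sqrt (1 + M ^ 2)) * d1 x (closure S \ S) := by
  intro x hx
  have hsqrt1 : (1:ℝ) ≤ Real.sqrt (1 + M ^ 2) := by
    have h0 : (1:ℝ) ≤ 1 + M ^ 2 := by nlinarith
    calc (1:ℝ) = Real.sqrt 1 := by simp
      _ ≤ Real.sqrt (1 + M ^ 2) := Real.sqrt_le_sqrt h0
  have hsqrtpos : (0:ℝ) < Real.sqrt (1 + M ^ 2) := lt_of_lt_of_le one_pos hsqrt1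
  by_cases hSne : S.Nonempty
  swap
  · have hSe : S = ∅ := Set.not_nonempty_iff_eq_empty.mp hSne
    have h1 : d1 x S = 1 := by rw [d1, if_neg hSne]
    have h2 : d1 x (closure S \ S) = 1 := by
      rw [d1, if_neg]
      rw [hSe, closure_empty, Set.diff_empty]
      exact Set.not_nonempty_empty
    rw [h1, h2, mul_one, ge_iff_le, div_le_one hsqrtpos]
    exact hsqrt1
  -- Extend φ to a continuous map ψ on all of ℝ^m agreeing on T.
  have hLipOn : ∀ i : Fin l, LipschitzOnWith (Real.toNNReal M) (fun u => φ u i) T := by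
    intro i
    apply LipschitzOnWith.of_dist_le_mul
    intro u hu v hv
    rw [Real.dist_eq]
    calc |φ u i - φ v i| = |(φ u - φ v) i| := by norm_num
      _ ≤ ‖φ u - φ v‖ := coord_le_norm _ i
      _ ≤ M * ‖u - v‖ := hLip u hu v hv
      _ = (Real.toNNReal M) * dist u v := by
          rw [Real.coe_toNNReal M hM, dist_eq_norm]
  have hgex : ∀ i : Fin l, ∃ g : EuclideanSpace ℝ (Fin m) → ℝ,
      LipschitzWith (Real.toNNReal M) g ∧ Set.EqOn (fun u => φ u i) g T :=
    fun i => (hLipOn i).extend_real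
  choose g hg1 hg2 using hgex
  set ψ : EuclideanSpace ℝ (Fin m) → EuclideanSpace ℝ (Fin l) :=
    fun u => (WithLp.equiv 2 _).symm (fun i => g i u) with hψdef
  have hψcont : Continuous ψ := by
    apply (PiLp.continuous_toLp 2 (fun _ : Fin l => ℝ)).comp
    exact continuous_pi fun i => (hg1 i).continuous
  have hψeq : ∀ u ∈ T, ψ u = φ u := by
    intro u hu
    ext i
    exact ((hg2 i) hu).symm
  have hψLip : ∀ u ∈ T, ∀ a ∈ closure T, ‖ψ a - φ u‖ ≤ M * ‖a - u‖ := by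
    intro u hu a ha
    have hCc : IsClosed {b : EuclideanSpace ℝ (Fin m) | ‖ψ b - φ u‖ ≤ M * ‖b - u‖} := by
      apply isClosed_le
      · exact (hψcont.sub continuous_const).norm
      · exact continuous_const.mul (continuous_id.sub continuous_const).norm
    have hTsub : T ⊆ {b | ‖ψ b - φ u‖ ≤ M * ‖b - u‖} := by
      intro b hb
      simp only [Set.mem_setOf_eq, hψeq b hb]
      exact hLip b hb u hu
    exact closure_minimal hTsub hCc ha
  set p : EuclideanSpace ℝ (Fin m) := x.fst with hpdef
  have hxp : p ∉ T := hx
  -- key construction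
  have key : ∀ u ∈ T, ∃ z ∈ closure S \ S,
      dist x z ≤ Real.sqrt (1 + M ^ 2) * dist x (eucMk u (φ u)) := by
    intro u hu
    set f : ℝ → EuclideanSpace ℝ (Fin m) := fun t => u + t • (p - u) with hfdef
    have hfcont : Continuous f := continuous_const.add (continuous_id.smul continuous_const)
    set A : Set ℝ := Set.Icc (0:ℝ) 1 ∩ f ⁻¹' Tᶜ with hAdef
    have hAclosed : IsClosed A := isClosed_Icc.inter (hT.isClosed_compl.preimage hfcont)
    have hf1 : f 1 = p := by simp [hfdef]
    have hf0 : f 0 = u := by simp [hfdef]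
    have hAne : A.Nonempty := ⟨1, ⟨by norm_num, by simp [hf1, hxp]⟩⟩
    have hAbdd : BddBelow A := ⟨0, fun t ht => ht.1.1⟩
    set t₀ : ℝ := sInf A with ht₀def
    have ht₀A : t₀ ∈ A := hAclosed.csInf_mem hAne hAbdd
    have ht₀0 : 0 ≤ t₀ := ht₀A.1.1
    have ht₀1 : t₀ ≤ 1 := ht₀A.1.2
    have ht₀pos : 0 < t₀ := by
      rcases lt_or_eq_of_le ht₀0 with h | h
      · exact h
      · exfalso; apply ht₀A.2; rw [← h, hf0]; exact hu
    have hIco : ∀ t ∈ Set.Ico (0:ℝ) t₀, f t ∈ T := by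
      intro t ht
      by_contra hft
      have : t ∈ A := ⟨⟨ht.1, le_trans (le_of_lt ht.2) ht₀1⟩, hft⟩
      exact absurd (csInf_le hAbdd this) (not_le.mpr ht.2)
    set q : EuclideanSpace ℝ (Fin m) := f t₀ with hqdef
    have hqT : q ∉ T := ht₀A.2
    have hqcl : q ∈ closure T := by
      have h1 : t₀ ∈ closure (Set.Ico (0:ℝ) t₀) := by
        rw [closure_Ico (ne_of_lt ht₀pos)]
        exact Set.right_mem_Icc.mpr ht₀0
      have h2 : q ∈ closure (f '' Set.Ico (0:ℝ) t₀) :=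
        image_closure_subset_closure_image hfcont ⟨t₀, h1, rfl⟩
      exact closure_mono (Set.image_subset_iff.mpr hIco) h2
    set w : EuclideanSpace ℝ (Fin l) := ψ q with hwdef
    set z : EucProd m l := eucMk q w with hzdef
    have hzcl : z ∈ closure S := by
      set k : EuclideanSpace ℝ (Fin m) → EucProd m l := fun a => eucMk a (ψ a) with hkdef
      have hkcont : Continuous k :=
        (WithLp.prod_continuous_toLp 2 _ _).comp (continuous_id.prodMk hψcont)
      have hkT : k '' T ⊆ S := by
        rintro _ ⟨a, ha, rfl⟩
        rw [hS]
        exact ⟨a, ha, by rw [hkdef]; simp [hψeq a ha]⟩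
      have : z ∈ closure (k '' T) :=
        image_closure_subset_closure_image hkcont ⟨q, hqcl, rfl⟩
      exact closure_mono hkT this
    have hzS : z ∉ S := by
      rw [hS]
      rintro ⟨v, hv, hzv⟩
      apply hqT
      have : q = v := congrArg (fun y : EucProd m l => y.fst) hzv
      rw [this]; exact hv
    refine ⟨z, ⟨hzcl, hzS⟩, ?_⟩
    -- distance estimate
    have hzfst : z.fst = q := rfl
    have hzsnd : z.snd = w := rfl
    set a : ℝ := dist p u with hadef
    set b : ℝ := dist x.snd (φ u) with hbdef
    have hdqu : dist q u = t₀ * a := by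
      rw [dist_eq_norm, hqdef, hfdef]
      simp only [add_sub_cancel_left]
      rw [norm_smul, Real.norm_eq_abs, abs_of_nonneg ht₀0, hadef, dist_eq_norm]
    have hdpq : dist p q = (1 - t₀) * a := by
      rw [dist_eq_norm, hqdef, hfdef]
      have : p - (u + t₀ • (p - u)) = (1 - t₀) • (p - u) := by
        rw [sub_smul, one_smul]; abel
      rw [this, norm_smul, Real.norm_eq_abs, abs_of_nonneg (by linarith), hadef, dist_eq_norm]
    have hdw : dist x.snd w ≤ b + M * (t₀ * a) := by
      calc dist x.snd w ≤ dist x.snd (φ u) + dist (φ u) w := dist_triangle _ _ _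
        _ ≤ b + M * (t₀ * a) := by
            apply add_le_add le_rfl
            rw [dist_comm, dist_eq_norm]
            calc ‖w - φ u‖ = ‖ψ q - φ u‖ := rfl
              _ ≤ M * ‖q - u‖ := hψLip u hu q hqcl
              _ = M * (t₀ * a) := by rw [← dist_eq_norm, hdqu]
    have hdxz : dist x z = Real.sqrt (((1 - t₀) * a) ^ 2 + dist x.snd w ^ 2) := by
      rw [WithLp.prod_dist_eq_of_L2, hzfst, hzsnd, hdpq]
    have hdxs : dist x (eucMk u (φ u)) = Real.sqrt (a ^ 2 + b ^ 2) := by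
      rw [WithLp.prod_dist_eq_of_L2]
      congr 2
    rw [hdxz, hdxs, ← Real.sqrt_mul (by positivity)]
    apply Real.sqrt_le_sqrt
    exact key_quad M a b (dist x.snd w) t₀ hM dist_nonneg dist_nonneg dist_nonneg ht₀0 ht₀1 hdw
  -- conclude
  obtain ⟨s₀, hs₀⟩ := hSne
  obtain ⟨u₀, hu₀, hs₀eq⟩ := by rw [hS] at hs₀; exact hs₀
  obtain ⟨z₀, hz₀, -⟩ := key u₀ hu₀
  have hbdne : (closure S \ S).Nonempty := ⟨z₀, hz₀⟩
  rw [d1, d1, if_pos ⟨s₀, hs₀⟩, if_pos hbdne, ge_iff_le]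
  by_contra hcon
  push_neg at hcon
  rw [Metric.infDist_lt_iff ⟨s₀, hs₀⟩] at hcon
  obtain ⟨s, hsS, hslt⟩ := hcon
  obtain ⟨u, hu, hseq⟩ : ∃ u ∈ T, s = eucMk u (φ u) := by rw [hS] at hsS; exact hsS
  obtain ⟨z, hz, hdist⟩ := key u hu
  have h1 : Metric.infDist x (closure S \ S) ≤ dist x z := Metric.infDist_le_dist_of_mem hz
  have h2 : dist x z ≤ Real.sqrt (1 + M ^ 2) * dist x s := by rw [hseq]; exact hdist
  have h3 : 1 / Real.sqrt (1 + M ^ 2) * Metric.infDist x (closure S \ S) ≤ dist x s := by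
    rw [div_mul_eq_mul_div, div_le_iff₀ hsqrtpos, one_mul]
    calc Metric.infDist x (closure S \ S) ≤ dist x z := h1
      _ ≤ dist x s * Real.sqrt (1 + M ^ 2) := by rw [mul_comm]; exact h2
  exact absurd hslt (not_lt.mpr h3)
end
end

section
/- Let 1 ≤ k ≤ n and p ≥ 1 be integers, let D ⊆ ℝ^k be open, regarded as a subset of ℝⁿ via v ↦ (v, 0) ∈ ℝ^k × ℝ^{n−k}, and let F = (F^{(α,β)})_{|α|+|β|≤p} (with α ∈ ℕ^k, β ∈ ℕ^{n−k}) be a C^p-Whitney field on D × {0}. Then for every β ∈ ℕ^{n−k} with |β| ≤ p, the function F^{(0,β)} is of class C^{p−|β|} on D, and D^α F^{(0,β)} = F^{(α,β)} on D for every α ∈ ℕ^k with |α| ≤ p − |β|. -/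
open scoped BigOperators NNReal

/-- First-order partial derivative in direction `i`. -/
noncomputable def pd {k : ℕ} {F : Type*} [NormedAddCommGroup F] [NormedSpace ℝ F]
    (i : Fin k) (f : (Fin k → ℝ) → F) : (Fin k → ℝ) → F :=
  fun x => fderiv ℝ f x (Pi.single i 1)

/-- Iterated partial derivative `D^α` for a multi-index `α`. -/
noncomputable def mD {k : ℕ} {F : Type*} [NormedAddCommGroup F] [NormedSpace ℝ F]
    (α : Fin k → ℕ) (f : (Fin k → ℝ) → F) : (Fin k → ℝ) → F :=
  (List.finRange k).foldr (fun i g => (pd i)^[α i] g) f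

/-- `|α| = α₁ + ⋯ + α_k`. -/
def deg {k : ℕ} (α : Fin k → ℕ) : ℕ := ∑ i, α i

/-- `α! = α₁! ⋯ α_k!`. -/
def mfact {k : ℕ} (α : Fin k → ℕ) : ℕ := ∏ i, Nat.factorial (α i)

/-- The (finite) set of multi-indices `α : Fin n → ℕ` with `|α| ≤ k`. -/
noncomputable def multiIdx (n k : ℕ) : Finset (Fin n → ℕ) :=
  ((Finset.univ : Finset (Fin n → Fin (k + 1))).image
    (fun f i => (f i : ℕ))).filter (fun α => deg α ≤ k)

/-- A `C^p`-Whitney field on `A ⊆ ℝⁿ`: a family of continuous functions `F^α`, `|α| ≤ p`,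
satisfying the Whitney compatibility condition
`F^β(a) - ∑_{|α| ≤ p - |β|} (1/α!) F^(α+β)(b) (a-b)^α = o(|a-b|^(p-|β|))` as `a, b → c` in `A`. -/
def IsWhitneyField (n p : ℕ) (A : Set (Fin n → ℝ))
    (F : (Fin n → ℕ) → (Fin n → ℝ) → ℝ) : Prop :=
  (∀ α : Fin n → ℕ, deg α ≤ p → ContinuousOn (F α) A) ∧
  ∀ c ∈ A, ∀ β : Fin n → ℕ, deg β ≤ p → ∀ ε > 0, ∃ δ > 0,
    ∀ a ∈ A, ∀ b ∈ A, dist a c < δ → dist b c < δ →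
      |F β a - ∑ α ∈ multiIdx n (p - deg β),
          (1 / (mfact α : ℝ)) * F (α + β) b * ∏ i, (a i - b i) ^ α i|
        ≤ ε * dist a b ^ (p - deg β)

/-- The embedding `ℝ^k ∋ v ↦ (v, 0) ∈ ℝ^k × ℝ^(n-k) = ℝⁿ`. -/
def emb0 {k l : ℕ} (v : Fin k → ℝ) : Fin (k + l) → ℝ := Fin.append v (0 : Fin l → ℝ)

lemma mem_multiIdx {n m : ℕ} {α : Fin n → ℕ} : α ∈ multiIdx n m ↔ deg α ≤ m := by
  unfold multiIdx
  simp only [Finset.mem_filter, Finset.mem_image, Finset.mem_univ, true_and, and_iff_right_iff_imp]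
  intro hd
  refine ⟨fun i => ⟨α i, ?_⟩, rfl⟩
  have : α i ≤ deg α := Finset.single_le_sum (f := α) (fun j _ => Nat.zero_le _) (Finset.mem_univ i)
  omega

lemma deg_eq_zero_iff {n : ℕ} {α : Fin n → ℕ} : deg α = 0 ↔ α = 0 := by
  unfold deg
  rw [Finset.sum_eq_zero_iff]
  constructor
  · intro h; funext i; exact h i (Finset.mem_univ i)
  · intro h i _; simp [h]

lemma deg_single {n : ℕ} (i : Fin n) (r : ℕ) : deg (Pi.single i r) = r := by
  unfold deg
  simp [Pi.single_apply, Finset.sum_ite_eq']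

lemma deg_eq_one {n : ℕ} {α : Fin n → ℕ} (h : deg α = 1) : ∃ i, α = Pi.single i 1 := by
  classical
  have h1 : ∃ i, α i ≠ 0 := by
    by_contra hc
    push_neg at hc
    have : α = 0 := funext fun i => hc i
    rw [deg_eq_zero_iff.2 this] at h; omega  -- wrong? deg 0 = 0, h : 0 = 1
  obtain ⟨i, hi⟩ := h1
  refine ⟨i, funext fun j => ?_⟩
  have hle : α i ≤ 1 := h ▸ Finset.single_le_sum (f := α) (fun j _ => Nat.zero_le _) (Finset.mem_univ i)
  have hαi : α i = 1 := by omega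
  have hrest : ∀ j, j ≠ i → α j = 0 := by
    intro j hj
    have := Finset.add_sum_erase Finset.univ α (Finset.mem_univ i)
    have hsum : ∑ x ∈ Finset.univ.erase i, α x = 0 := by
      unfold deg at h; omega
    rw [Finset.sum_eq_zero_iff] at hsum
    exact hsum j (Finset.mem_erase.2 ⟨hj, Finset.mem_univ j⟩)
  rcases eq_or_ne j i with rfl | hj
  · simp [hαi]
  · simp [Pi.single_apply, hj, hrest j hj]

lemma mfact_zero {n : ℕ} : mfact (0 : Fin n → ℕ) = 1 := by simp [mfact]

lemma mfact_single {n : ℕ} (i : Fin n) : mfact (Pi.single i 1) = 1 := by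
  unfold mfact
  refine Finset.prod_eq_one fun j _ => ?_
  rcases eq_or_ne j i with rfl | hj
  · simp
  · simp [Pi.single_apply, hj]

lemma deg_append {k l : ℕ} (α : Fin k → ℕ) (β : Fin l → ℕ) :
    deg (Fin.append α β) = deg α + deg β := by
  unfold deg
  rw [Fin.sum_univ_add]
  simp [Fin.append_left, Fin.append_right]

lemma append_add {k l : ℕ} (α0 α : Fin k → ℕ) (β : Fin l → ℕ) :
    Fin.append (α0 + α) β = Fin.append α0 (0 : Fin l → ℕ) + Fin.append α β := by
  funext i
  induction i using Fin.addCases with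
  | left i => simp [Fin.append_left]
  | right i => simp [Fin.append_right]

lemma mfact_append0 {k l : ℕ} (α : Fin k → ℕ) :
    mfact (Fin.append α (0 : Fin l → ℕ)) = mfact α := by
  unfold mfact
  rw [Fin.prod_univ_add]
  simp [Fin.append_left, Fin.append_right]

lemma dist_emb0 {k l : ℕ} (u v : Fin k → ℝ) : dist (emb0 (l := l) u) (emb0 v) = dist u v := by
  apply le_antisymm
  · rw [dist_pi_le_iff dist_nonneg]
    intro i
    induction i using Fin.addCases with
    | left i => simp only [emb0, Fin.append_left]; exact dist_le_pi_dist u v i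
    | right i => simp [emb0, Fin.append_right]
  · rw [dist_pi_le_iff dist_nonneg]
    intro i
    have := dist_le_pi_dist (emb0 (l := l) u) (emb0 v) (Fin.castAdd l i)
    simpa [emb0, Fin.append_left] using this

lemma continuous_emb0 {k l : ℕ} : Continuous (emb0 (k := k) (l := l)) := by
  refine continuous_pi fun i => ?_
  induction i using Fin.addCases with
  | left i => simpa [emb0, Fin.append_left] using continuous_apply i
  | right i => simpa [emb0, Fin.append_right] using continuous_const

lemma append_inj {k l : ℕ} {α α' : Fin k → ℕ}
    (h : Fin.append α (0 : Fin l → ℕ) = Fin.append α' 0) : α = α' := by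
  funext i
  have := congrFun h (Fin.castAdd l i)
  simpa [Fin.append_left] using this

lemma sum_restrict {k l : ℕ} (q : ℕ) (u v : Fin k → ℝ) (G : (Fin (k + l) → ℕ) → ℝ) :
    ∑ α' ∈ multiIdx (k + l) q,
        (1 / (mfact α' : ℝ)) * G α' * ∏ i, (emb0 u i - emb0 v i) ^ α' i
      = ∑ α0 ∈ multiIdx k q,
        (1 / (mfact α0 : ℝ)) * G (Fin.append α0 0) * ∏ i, (u i - v i) ^ α0 i := by
  classical
  set S : Finset (Fin (k + l) → ℕ) :=
    (multiIdx k q).image (fun α0 => Fin.append α0 (0 : Fin l → ℕ)) with hS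
  have hsub : S ⊆ multiIdx (k + l) q := by
    intro α' hα'
    rw [hS, Finset.mem_image] at hα'
    obtain ⟨α0, hα0, rfl⟩ := hα'
    rw [mem_multiIdx] at hα0 ⊢
    rw [deg_append]
    simpa [deg_eq_zero_iff.2 rfl] using hα0
  rw [← Finset.sum_subset hsub ?_]
  · rw [hS, Finset.sum_image (fun a _ b _ h => append_inj h)]
    refine Finset.sum_congr rfl fun α0 _ => ?_
    rw [mfact_append0]
    congr 1
    rw [Fin.prod_univ_add]
    have h1 : ∀ i : Fin k,
        (emb0 (l := l) u (Fin.castAdd l i) - emb0 v (Fin.castAdd l i)) ^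
          (Fin.append α0 (0 : Fin l → ℕ) (Fin.castAdd l i)) = (u i - v i) ^ α0 i := by
      intro i; simp [emb0, Fin.append_left]
    have h2 : ∀ i : Fin l,
        (emb0 (l := l) u (Fin.natAdd k i) - emb0 v (Fin.natAdd k i)) ^
          (Fin.append α0 (0 : Fin l → ℕ) (Fin.natAdd k i)) = 1 := by
      intro i; simp [emb0, Fin.append_right]
    rw [Finset.prod_congr rfl fun i _ => h1 i, Finset.prod_congr rfl fun i _ => h2 i]
    simp
  · intro α' hmem hnot
    have hz : ∃ j : Fin l, α' (Fin.natAdd k j) ≠ 0 := by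
      by_contra hc
      push_neg at hc
      apply hnot
      rw [hS, Finset.mem_image]
      refine ⟨fun i => α' (Fin.castAdd l i), ?_, ?_⟩
      · rw [mem_multiIdx] at hmem ⊢
        refine le_trans ?_ hmem
        unfold deg
        rw [Fin.sum_univ_add]
        exact Nat.le_add_right _ _
      · funext i
        induction i using Fin.addCases with
        | left i => simp [Fin.append_left]
        | right i => simp [Fin.append_right, hc i]
    obtain ⟨j, hj⟩ := hz
    have : (emb0 (l := l) u (Fin.natAdd k j) - emb0 v (Fin.natAdd k j)) ^ α' (Fin.natAdd k j) = 0 := by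
      simp [emb0, Fin.append_right]
      exact fun h => absurd h hj
    rw [Finset.prod_eq_zero (Finset.mem_univ (Fin.natAdd k j)) this]
    ring

lemma sum_multiIdx_split {k q : ℕ} (hq : 1 ≤ q) (t : (Fin k → ℕ) → ℝ) :
    ∑ α ∈ multiIdx k q, t α
      = t 0 + (∑ i : Fin k, t (Pi.single i 1)) +
        ∑ α ∈ (multiIdx k q).filter (fun α => 2 ≤ deg α), t α := by
  classical
  rw [← Finset.sum_filter_add_sum_filter_not (multiIdx k q) (fun α => deg α ≤ 1) t]
  congr 1
  · have hfil : (multiIdx k q).filter (fun α => deg α ≤ 1)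
        = insert (0 : Fin k → ℕ) (Finset.univ.image fun i : Fin k => Pi.single i 1) := by
      ext α
      simp only [Finset.mem_filter, mem_multiIdx, Finset.mem_insert, Finset.mem_image,
        Finset.mem_univ, true_and]
      constructor
      · rintro ⟨-, hd⟩
        interval_cases h : deg α
        · exact Or.inl (deg_eq_zero_iff.1 h)
        · obtain ⟨i, hi⟩ := deg_eq_one h
          exact Or.inr ⟨i, hi.symm⟩
      · rintro (rfl | ⟨i, rfl⟩)
        · constructor
          · simp [deg_eq_zero_iff.2 rfl]
          · simp [deg_eq_zero_iff.2 rfl]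
        · rw [deg_single]; exact ⟨hq, le_refl 1⟩
    rw [hfil, Finset.sum_insert, Finset.sum_image]
    · intro i _ j _ h
      by_contra hij
      have := congrFun h i
      simp [Pi.single_apply, hij] at this
    · simp only [Finset.mem_image, Finset.mem_univ, true_and, not_exists]
      intro i h
      have := congrFun h i
      simp [Pi.single_apply] at this
  · apply Finset.sum_congr _ fun _ _ => rfl
    apply Finset.filter_congr
    intro α _
    constructor
    · intro h; have h' : 1 < deg α := Nat.lt_of_not_le (by simpa using h); exact h'
    · intro h; simp; omega

lemma whitney_restricted {k l p : ℕ} {D : Set (Fin k → ℝ)}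
    {F : (Fin (k + l) → ℕ) → (Fin (k + l) → ℝ) → ℝ}
    (hW : IsWhitneyField (k + l) p (emb0 '' D) F)
    (β : Fin l → ℕ) (α : Fin k → ℕ) (hαβ : deg α + deg β ≤ p)
    {x : Fin k → ℝ} (hx : x ∈ D) {ε : ℝ} (hε : 0 < ε) :
    ∃ δ > 0, ∀ u ∈ D, ∀ v ∈ D, dist u x < δ → dist v x < δ →
      |F (Fin.append α β) (emb0 u) - ∑ α0 ∈ multiIdx k (p - (deg α + deg β)),
          (1 / (mfact α0 : ℝ)) * F (Fin.append (α0 + α) β) (emb0 v) * ∏ i, (u i - v i) ^ α0 i|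
        ≤ ε * dist u v ^ (p - (deg α + deg β)) := by
  obtain ⟨δ, hδ, h⟩ := hW.2 (emb0 x) ⟨x, hx, rfl⟩ (Fin.append α β)
    (by rw [deg_append]; exact hαβ) ε hε
  refine ⟨δ, hδ, fun u hu v hv hux hvx => ?_⟩
  have key := h (emb0 u) ⟨u, hu, rfl⟩ (emb0 v) ⟨v, hv, rfl⟩
    (by rwa [dist_emb0]) (by rwa [dist_emb0])
  rw [dist_emb0, deg_append, sum_restrict (p - (deg α + deg β)) u v
    (fun α' => F (α' + Fin.append α β) (emb0 v))] at key
  simpa [← append_add] using key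

lemma hasFDerivAt_whitney {k l p : ℕ} {D : Set (Fin k → ℝ)} (hD : IsOpen D)
    {F : (Fin (k + l) → ℕ) → (Fin (k + l) → ℝ) → ℝ}
    (hW : IsWhitneyField (k + l) p (emb0 '' D) F)
    (β : Fin l → ℕ) (α : Fin k → ℕ) (hαβ : deg α + deg β < p)
    {x : Fin k → ℝ} (hx : x ∈ D) :
    HasFDerivAt (fun v => F (Fin.append α β) (emb0 v))
      (∑ i : Fin k, F (Fin.append (α + Pi.single i 1) β) (emb0 x) •
        (ContinuousLinearMap.proj (R := ℝ) (φ := fun _ : Fin k => ℝ) i)) x := by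
  classical
  set q : ℕ := p - (deg α + deg β) with hq
  have hq1 : 1 ≤ q := by omega
  set f : (Fin k → ℝ) → ℝ := fun v => F (Fin.append α β) (emb0 v) with hf
  set L : (Fin k → ℝ) →L[ℝ] ℝ := ∑ i : Fin k, F (Fin.append (α + Pi.single i 1) β) (emb0 x) •
        (ContinuousLinearMap.proj (R := ℝ) (φ := fun _ : Fin k => ℝ) i) with hL
  have hLapp : ∀ w : Fin k → ℝ, L w = ∑ i : Fin k,
      F (Fin.append (α + Pi.single i 1) β) (emb0 x) * w i := by
    intro w
    rw [hL, ContinuousLinearMap.sum_apply]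
    refine Finset.sum_congr rfl fun i _ => ?_
    simp [ContinuousLinearMap.proj]
  refine HasFDerivAt.of_isLittleO ?_
  rw [Asymptotics.isLittleO_iff]
  intro c hc
  obtain ⟨δ1, hδ1, hWh⟩ := whitney_restricted hW β α (le_of_lt hαβ) hx (half_pos hc)
  set T2 : Finset (Fin k → ℕ) := (multiIdx k q).filter (fun α0 => 2 ≤ deg α0) with hT2
  set A : ℝ := ∑ α0 ∈ T2, (1 / (mfact α0 : ℝ)) * |F (Fin.append (α0 + α) β) (emb0 x)| with hA
  have hAnn : 0 ≤ A := by
    refine Finset.sum_nonneg fun α0 _ => ?_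
    positivity
  set δ2 : ℝ := c / (2 * (A + 1)) with hδ2
  have hδ2pos : 0 < δ2 := by positivity
  have hev : ∀ᶠ u in nhds x, u ∈ D ∧ dist u x < δ1 ∧ dist u x ≤ 1 ∧ dist u x ≤ δ2 := by
    have h1 : ∀ᶠ u in nhds x, u ∈ D := hD.mem_nhds hx
    have h2 : ∀ᶠ u in nhds x, dist u x < δ1 := Metric.ball_mem_nhds x hδ1
    have h3 : ∀ᶠ u in nhds x, dist u x ≤ 1 :=
      Metric.closedBall_mem_nhds x one_pos
    have h4 : ∀ᶠ u in nhds x, dist u x ≤ δ2 := Metric.closedBall_mem_nhds x hδ2pos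
    filter_upwards [h1, h2, h3, h4] with u hu1 hu2 hu3 hu4
    exact ⟨hu1, hu2, hu3, hu4⟩
  filter_upwards [hev] with u ⟨huD, hu1, hu2, hu3⟩
  have hkey := hWh u huD x hx hu1 (by simpa using hδ1)
  -- split the sum
  set t : (Fin k → ℕ) → ℝ := fun α0 =>
    (1 / (mfact α0 : ℝ)) * F (Fin.append (α0 + α) β) (emb0 x) * ∏ i, (u i - x i) ^ α0 i with ht
  rw [sum_multiIdx_split hq1 t] at hkey
  have ht0 : t 0 = f x := by
    simp [ht, hf, mfact_zero]
  have htsingle : ∀ i : Fin k, t (Pi.single i 1) =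
      F (Fin.append (α + Pi.single i 1) β) (emb0 x) * (u i - x i) := by
    intro i
    rw [ht]
    simp only [mfact_single, Nat.cast_one, one_div, inv_one, one_mul]
    rw [add_comm]
    congr 1
    calc ∏ j, (u j - x j) ^ (Pi.single i 1 : Fin k → ℕ) j
        = ∏ j, if j = i then (u j - x j) else 1 := by
          refine Finset.prod_congr rfl fun j _ => ?_
          rcases eq_or_ne j i with rfl | hj
          · simp
          · simp [Pi.single_apply, hj]
      _ = (u i - x i) := by simp
  rw [ht0, Finset.sum_congr rfl (fun i _ => htsingle i)] at hkey
  -- now hkey : |f u - (f x + ∑ i ... * (u i - x i) + ∑ T2 t)| ≤ (c/2) * dist u x ^ q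
  have hdist : ‖u - x‖ = dist u x := by rw [dist_eq_norm]
  have hprod_bound : ∀ α0 ∈ T2, |t α0| ≤
      (1 / (mfact α0 : ℝ)) * |F (Fin.append (α0 + α) β) (emb0 x)| * dist u x ^ 2 := by
    intro α0 hα0
    rw [ht]
    simp only [abs_mul]
    have h1 : |(1 : ℝ) / (mfact α0 : ℝ)| = 1 / (mfact α0 : ℝ) := abs_of_nonneg (by positivity)
    rw [h1]
    refine mul_le_mul_of_nonneg_left ?_ (by positivity)
    have hp1 : |∏ i, (u i - x i) ^ α0 i| ≤ dist u x ^ deg α0 := by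
      rw [Finset.abs_prod]
      have : ∀ i : Fin k, |(u i - x i) ^ α0 i| ≤ dist u x ^ α0 i := by
        intro i
        rw [abs_pow]
        refine pow_le_pow_left₀ (abs_nonneg _) ?_ _
        calc |u i - x i| = dist (u i) (x i) := by rw [Real.dist_eq]
          _ ≤ dist u x := dist_le_pi_dist u x i
      calc ∏ i, |(u i - x i) ^ α0 i| ≤ ∏ i, dist u x ^ α0 i :=
            Finset.prod_le_prod (fun i _ => abs_nonneg _) (fun i _ => this i)
        _ = dist u x ^ deg α0 := by rw [Finset.prod_pow_eq_pow_sum]; rfl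
    refine le_trans hp1 ?_
    refine pow_le_pow_of_le_one dist_nonneg hu2 ?_
    exact (Finset.mem_filter.1 hα0).2
  have hT2bound : |∑ α0 ∈ T2, t α0| ≤ A * dist u x ^ 2 := by
    calc |∑ α0 ∈ T2, t α0| ≤ ∑ α0 ∈ T2, |t α0| := Finset.abs_sum_le_sum_abs _ _
      _ ≤ ∑ α0 ∈ T2, (1 / (mfact α0 : ℝ)) * |F (Fin.append (α0 + α) β) (emb0 x)| * dist u x ^ 2 :=
          Finset.sum_le_sum hprod_bound
      _ = A * dist u x ^ 2 := by rw [hA, Finset.sum_mul]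
  -- final estimate
  have hmain : |f u - f x - L (u - x)| ≤ c / 2 * dist u x ^ q + A * dist u x ^ 2 := by
    have hLval : L (u - x) = ∑ i : Fin k,
        F (Fin.append (α + Pi.single i 1) β) (emb0 x) * (u i - x i) := by
      rw [hLapp]
      rfl
    have : f u - f x - L (u - x) =
        (f u - (f x + ∑ i : Fin k, F (Fin.append (α + Pi.single i 1) β) (emb0 x) * (u i - x i)
          + ∑ α0 ∈ T2, t α0)) + ∑ α0 ∈ T2, t α0 := by
      rw [hLval]; ring
    rw [this]
    exact le_trans (abs_add_le _ _) (add_le_add hkey hT2bound)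
  have hb1 : c / 2 * dist u x ^ q ≤ c / 2 * dist u x := by
    refine mul_le_mul_of_nonneg_left ?_ (by positivity)
    calc dist u x ^ q ≤ dist u x ^ 1 := pow_le_pow_of_le_one dist_nonneg hu2 hq1
      _ = dist u x := pow_one _
  have hb2 : A * dist u x ^ 2 ≤ c / 2 * dist u x := by
    have : A * dist u x ^ 2 = (A * dist u x) * dist u x := by ring
    rw [this]
    refine mul_le_mul_of_nonneg_right ?_ dist_nonneg
    calc A * dist u x ≤ A * δ2 := mul_le_mul_of_nonneg_left hu3 hAnn
      _ ≤ (A + 1) * δ2 := by nlinarith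
      _ = c / 2 := by
          rw [hδ2]
          field_simp
  rw [Real.norm_eq_abs, hdist]
  calc |f u - f x - L (u - x)| ≤ c / 2 * dist u x ^ q + A * dist u x ^ 2 := hmain
    _ ≤ c / 2 * dist u x + c / 2 * dist u x := add_le_add hb1 hb2
    _ = c * dist u x := by ring

lemma deg_add {n : ℕ} (α γ : Fin n → ℕ) : deg (α + γ) = deg α + deg γ := by
  unfold deg
  simp [Finset.sum_add_distrib]

section partials
variable {k : ℕ} {D : Set (Fin k → ℝ)}
  {m : ℕ} {g : (Fin k → ℕ) → (Fin k → ℝ) → ℝ}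

lemma pd_eq (hD : IsOpen D)
    (hder : ∀ α, deg α < m → ∀ x ∈ D, HasFDerivAt (g α)
      (∑ i : Fin k, g (α + Pi.single i 1) x •
        (ContinuousLinearMap.proj (R := ℝ) (φ := fun _ : Fin k => ℝ) i)) x)
    (i : Fin k) (α : Fin k → ℕ) (hα : deg α < m) (f : (Fin k → ℝ) → ℝ)
    (hfg : ∀ y ∈ D, f y = g α y) {x : Fin k → ℝ} (hx : x ∈ D) :
    pd i f x = g (α + Pi.single i 1) x := by
  have hev : f =ᶠ[nhds x] g α :=
    Filter.eventually_of_mem (hD.mem_nhds hx) hfg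
  have h1 : fderiv ℝ f x = fderiv ℝ (g α) x := hev.fderiv_eq
  have h2 : fderiv ℝ (g α) x = ∑ j : Fin k, g (α + Pi.single j 1) x •
      (ContinuousLinearMap.proj (R := ℝ) (φ := fun _ : Fin k => ℝ) j) :=
    (hder α hα x hx).fderiv
  rw [pd, h1, h2, ContinuousLinearMap.sum_apply]
  have : ∀ j : Fin k, (g (α + Pi.single j 1) x •
      (ContinuousLinearMap.proj (R := ℝ) (φ := fun _ : Fin k => ℝ) j)) (Pi.single i 1)
      = if j = i then g (α + Pi.single j 1) x else 0 := by
    intro j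
    rcases eq_or_ne j i with rfl | hj
    · simp [ContinuousLinearMap.proj]
    · simp [ContinuousLinearMap.proj, Pi.single_apply, hj]
  rw [Finset.sum_congr rfl fun j _ => this j]
  simp

lemma pd_iter (hD : IsOpen D)
    (hder : ∀ α, deg α < m → ∀ x ∈ D, HasFDerivAt (g α)
      (∑ i : Fin k, g (α + Pi.single i 1) x •
        (ContinuousLinearMap.proj (R := ℝ) (φ := fun _ : Fin k => ℝ) i)) x)
    (i : Fin k) :
    ∀ (r : ℕ) (α : Fin k → ℕ), deg α + r ≤ m → ∀ f : (Fin k → ℝ) → ℝ,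
      (∀ y ∈ D, f y = g α y) → ∀ x ∈ D, (pd i)^[r] f x = g (α + Pi.single i r) x := by
  intro r
  induction r with
  | zero =>
    intro α hα f hfg x hx
    simpa using hfg x hx
  | succ r ih =>
    intro α hα f hfg x hx
    rw [Function.iterate_succ_apply]
    have hstep : ∀ y ∈ D, pd i f y = g (α + Pi.single i 1) y := by
      intro y hy
      exact pd_eq hD hder i α (by omega) f hfg hy
    have := ih (α + Pi.single i 1) (by rw [deg_add, deg_single]; omega) (pd i f) hstep x hx
    rw [this, add_assoc, ← Pi.single_add, add_comm 1 r]

lemma foldr_eq (hD : IsOpen D)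
    (hder : ∀ α, deg α < m → ∀ x ∈ D, HasFDerivAt (g α)
      (∑ i : Fin k, g (α + Pi.single i 1) x •
        (ContinuousLinearMap.proj (R := ℝ) (φ := fun _ : Fin k => ℝ) i)) x)
    (α : Fin k → ℕ) :
    ∀ (lst : List (Fin k)) (α0 : Fin k → ℕ),
      deg α0 + deg ((lst.map (fun i => Pi.single i (α i))).sum) ≤ m →
      ∀ f : (Fin k → ℝ) → ℝ, (∀ y ∈ D, f y = g α0 y) → ∀ x ∈ D,
      (lst.foldr (fun i h => (pd i)^[α i] h) f) x
        = g (α0 + (lst.map (fun i => Pi.single i (α i))).sum) x := by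
  intro lst
  induction lst with
  | nil =>
    intro α0 hdeg f hfg x hx
    simpa using hfg x hx
  | cons i tl ih =>
    intro α0 hdeg f hfg x hx
    have hstl : deg ((List.map (fun i => Pi.single i (α i)) (i :: tl)).sum)
        = α i + deg ((tl.map (fun i => Pi.single i (α i))).sum) := by
      rw [List.map_cons, List.sum_cons, deg_add, deg_single]
    rw [List.foldr_cons]
    have hih : ∀ y ∈ D, (tl.foldr (fun i h => (pd i)^[α i] h) f) y
        = g (α0 + (tl.map (fun i => Pi.single i (α i))).sum) y := by
      intro y hy
      exact ih α0 (by omega) f hfg y hy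
    have := pd_iter hD hder i (α i) (α0 + (tl.map (fun i => Pi.single i (α i))).sum)
      (by rw [deg_add]; omega) _ hih x hx
    rw [this, List.map_cons, List.sum_cons]
    congr 1
    abel

lemma mD_eq_of_partials (hD : IsOpen D)
    (hder : ∀ α, deg α < m → ∀ x ∈ D, HasFDerivAt (g α)
      (∑ i : Fin k, g (α + Pi.single i 1) x •
        (ContinuousLinearMap.proj (R := ℝ) (φ := fun _ : Fin k => ℝ) i)) x)
    (α : Fin k → ℕ) (hα : deg α ≤ m) {x : Fin k → ℝ} (hx : x ∈ D) :
    mD α (g 0) x = g α x := by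
  have hsum : ((List.finRange k).map (fun i => Pi.single i (α i))).sum = α := by
    rw [← Fin.sum_univ_def]
    exact Finset.univ_sum_single α
  have := foldr_eq hD hder α (List.finRange k) 0
    (by rw [hsum]; simpa [deg_eq_zero_iff.2 rfl] using hα)
    (g 0) (fun y _ => rfl) x hx
  rw [mD, this, hsum, zero_add]

lemma contDiffOn_of_partials (hD : IsOpen D) :
    ∀ (m : ℕ) (g : (Fin k → ℕ) → (Fin k → ℝ) → ℝ),
    (∀ α, deg α ≤ m → ContinuousOn (g α) D) →
    (∀ α, deg α < m → ∀ x ∈ D, HasFDerivAt (g α)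
      (∑ i : Fin k, g (α + Pi.single i 1) x •
        (ContinuousLinearMap.proj (R := ℝ) (φ := fun _ : Fin k => ℝ) i)) x) →
    ContDiffOn ℝ (m : ℕ∞) (g 0) D := by
  intro m
  induction m with
  | zero =>
    intro g hcont _
    simpa [contDiffOn_zero] using hcont 0 (by simp [deg_eq_zero_iff.2 rfl])
  | succ m ih =>
    intro g hcont hder
    have hcast : (((m + 1 : ℕ) : ℕ∞) : WithTop ℕ∞) = ((m : ℕ∞) : WithTop ℕ∞) + 1 := by
      norm_cast
    rw [hcast, contDiffOn_succ_iff_fderiv_of_isOpen hD]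
    refine ⟨?_, ?_, ?_⟩
    · intro x hx
      exact (hder 0 (by simp [deg_eq_zero_iff.2 rfl]) x hx).differentiableAt.differentiableWithinAt
    · intro h
      exact absurd h (by simp)
    · have hcd : ∀ i : Fin k, ContDiffOn ℝ (m : ℕ∞) (g (0 + Pi.single i 1)) D := by
        intro i
        refine ih (fun α => g (α + Pi.single i 1)) ?_ ?_
        · intro α hα
          exact hcont (α + Pi.single i 1) (by rw [deg_add, deg_single]; omega)
        · intro α hα x hx
          have h := hder (α + Pi.single i 1) (by rw [deg_add, deg_single]; omega) x hx
          have heq : (∑ j : Fin k, g (α + Pi.single i 1 + Pi.single j 1) x •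
                (ContinuousLinearMap.proj (R := ℝ) (φ := fun _ : Fin k => ℝ) j))
              = ∑ j : Fin k, g ((α + Pi.single j 1) + Pi.single i 1) x •
                (ContinuousLinearMap.proj (R := ℝ) (φ := fun _ : Fin k => ℝ) j) := by
            refine Finset.sum_congr rfl fun j _ => ?_
            rw [add_right_comm]
          rwa [heq] at h
      refine ContDiffOn.congr ?_
        (fun x hx => (hder 0 (by simp [deg_eq_zero_iff.2 rfl]) x hx).fderiv)
      refine ContDiffOn.sum fun i _ => ?_
      exact (hcd i).smul contDiffOn_const

end partials

/-- **Remark 4.5 (Glaeser).** Let `1 ≤ k ≤ n`, `D ⊆ ℝ^k` open, regarded inside `ℝⁿ` via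
`v ↦ (v, 0)`, and let `F = (F^(α,β))` be a `C^p`-Whitney field on `D × {0}`. Then for every
`β` with `|β| ≤ p` the function `F^(0,β)` is of class `C^(p-|β|)` on `D` and
`D^α F^(0,β) = F^(α,β)` on `D` for all `|α| ≤ p - |β|`. -/
theorem glaeser_partial_jets (k l p : ℕ) (hk : 1 ≤ k) (hp : 1 ≤ p)
    (D : Set (Fin k → ℝ)) (hD : IsOpen D)
    (F : (Fin (k + l) → ℕ) → (Fin (k + l) → ℝ) → ℝ)
    (hF : IsWhitneyField (k + l) p (emb0 '' D) F) :
    ∀ β : Fin l → ℕ, deg β ≤ p →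
      ContDiffOn ℝ ((p - deg β : ℕ) : ℕ∞)
        (fun v : Fin k → ℝ => F (Fin.append (0 : Fin k → ℕ) β) (emb0 v)) D ∧
      ∀ α : Fin k → ℕ, deg α ≤ p - deg β → ∀ v ∈ D,
        mD α (fun v : Fin k → ℝ => F (Fin.append (0 : Fin k → ℕ) β) (emb0 v)) v =
          F (Fin.append α β) (emb0 v) := by
  intro β hβ
  set m : ℕ := p - deg β with hm
  set g : (Fin k → ℕ) → (Fin k → ℝ) → ℝ :=
    fun α => fun v => F (Fin.append α β) (emb0 v) with hg
  have hcont : ∀ α, deg α ≤ m → ContinuousOn (g α) D := by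
    intro α hα
    have h1 : ContinuousOn (F (Fin.append α β)) (emb0 '' D) :=
      hF.1 (Fin.append α β) (by rw [deg_append]; omega)
    exact h1.comp continuous_emb0.continuousOn (fun v hv => ⟨v, hv, rfl⟩)
  have hder : ∀ α, deg α < m → ∀ x ∈ D, HasFDerivAt (g α)
      (∑ i : Fin k, g (α + Pi.single i 1) x •
        (ContinuousLinearMap.proj (R := ℝ) (φ := fun _ : Fin k => ℝ) i)) x := by
    intro α hα x hx
    exact hasFDerivAt_whitney hD hF β α (by omega) hx
  constructor
  · exact contDiffOn_of_partials hD m g hcont hder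
  · intro α hα v hv
    exact mD_eq_of_partials hD hder α hα hv
end
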